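/- Let K ≥ 1 be a real number and define F⁻ : (0,1) → ℝ by F⁻(r) = √( [K(2r−1) + (K+1)Δ(r) + 1] / (√(K+1) · Δ(r)) ). Then F⁻ is positive and differentiable on (0,1) and satisfies the transport equation F⁻′(r)/F⁻(r) = −(1/2)[Δ′(r)/Δ(r) + 1/(1−r) − 1/((1−r) Δ(r))] for all r ∈ (0,1). -/

import Mathlib

set_option maxHeartbeats 1000000


/-- The spectral gap `Δ(r) = √(1 - 4 K r (1-r)/(K+1))` of the restricted Grover Hamiltonian. -/
noncomputable def groverGap (K r : ℝ) : ℝ :=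
  Real.sqrt (1 - 4 * K * r * (1 - r) / (K + 1))

/-- The zeroth-order WKB amplitude
`F⁻(r) = √([K(2r-1) + (K+1)Δ(r) + 1] / (√(K+1) Δ(r)))`. -/
noncomputable def wkbFminus (K : ℝ) : ℝ → ℝ :=
  fun r => Real.sqrt ((K * (2 * r - 1) + (K + 1) * groverGap K r + 1) /
    (Real.sqrt (K + 1) * groverGap K r))

/-- `F⁻` is positive and differentiable on `(0,1)` and satisfies the transport
equation `F⁻′/F⁻ = -(1/2)[Δ′/Δ + 1/(1-r) - 1/((1-r)Δ)]`. -/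
theorem grover_wkb_Fminus_transport (K : ℝ) (hK : 1 ≤ K) :
    ∀ r ∈ Set.Ioo (0 : ℝ) 1,
      0 < wkbFminus K r
      ∧ DifferentiableAt ℝ (wkbFminus K) r
      ∧ deriv (wkbFminus K) r / wkbFminus K r
          = -(1 / 2) * (deriv (groverGap K) r / groverGap K r + 1 / (1 - r)
              - 1 / ((1 - r) * groverGap K r)) := by
  intro r hr
  obtain ⟨hr0, hr1⟩ := hr
  have hS : (0:ℝ) < K + 1 := by linarith
  have hSs : 0 < Real.sqrt (K + 1) := Real.sqrt_pos.mpr hS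
  have hSq : Real.sqrt (K+1) * Real.sqrt (K+1) = K + 1 := Real.mul_self_sqrt hS.le
  have hg : 0 < 1 - 4 * K * r * (1 - r) / (K + 1) := by
    rw [sub_pos, div_lt_one hS]
    nlinarith [sq_nonneg (2*r-1)]
  have hdpos : 0 < groverGap K r := Real.sqrt_pos.mpr hg
  set d := groverGap K r with hd
  have hd2 : d ^ 2 = 1 - 4 * K * r * (1 - r) / (K + 1) := Real.sq_sqrt hg.le
  have hSd2 : (K+1) * d ^ 2 = K * (2*r-1)^2 + 1 := by
    rw [hd2]; field_simp; ring
  have hprod : (K * (2*r-1) + (K+1) * d + 1) * ((K+1)*d - (K*(2*r-1)+1))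
      = 4 * K * (1-r)^2 := by linear_combination (K+1) * hSd2
  have hN : 0 < K * (2 * r - 1) + (K + 1) * d + 1 := by
    nlinarith [mul_pos hS hdpos, sq_nonneg (1-r), mul_pos (mul_pos (show (0:ℝ)<4 by norm_num) (show (0:ℝ)<K by linarith)) (mul_pos (show (0:ℝ)<1-r by linarith) (show (0:ℝ)<1-r by linarith))]
  -- derivative of the inner polynomial of groverGap
  have hg_deriv : HasDerivAt (fun x : ℝ => 1 - 4 * K * x * (1 - x) / (K + 1))
      (4*K*(2*r-1)/(K+1)) r := by
    have h1 : HasDerivAt (fun x : ℝ => 4 * K * x * (1 - x)) (4*K*(1-2*r)) r := by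
      have := (((hasDerivAt_id r).const_mul (4*K)).mul
        ((hasDerivAt_id r).const_sub 1))
      exact this.congr_deriv (by simp only [id]; ring)
    have h2 := (h1.div_const (K+1)).const_sub 1
    exact h2.congr_deriv (by ring)
  have hDelta : HasDerivAt (groverGap K) (4*K*(2*r-1)/(K+1) / (2*d)) r := by
    have := hg_deriv.sqrt (ne_of_gt hg)
    exact this
  set D' : ℝ := 4*K*(2*r-1)/(K+1) / (2*d) with hD'
  -- derivative of numerator N
  have hNum : HasDerivAt (fun x : ℝ => K * (2 * x - 1) + (K + 1) * groverGap K x + 1)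
      (2*K + (K+1) * D') r := by
    have h1 : HasDerivAt (fun x : ℝ => K * (2 * x - 1)) (2*K) r := by
      have := ((hasDerivAt_id r).const_mul (2:ℝ)).sub_const 1
      have := this.const_mul K
      exact this.congr_deriv (by ring)
    exact (h1.add (hDelta.const_mul (K+1))).add_const 1
  have hDen : HasDerivAt (fun x : ℝ => Real.sqrt (K+1) * groverGap K x)
      (Real.sqrt (K+1) * D') r := hDelta.const_mul _
  have hdne : Real.sqrt (K+1) * d ≠ 0 := (mul_pos hSs hdpos).ne'
  set N : ℝ := K * (2 * r - 1) + (K + 1) * d + 1 with hNdef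
  have hh : HasDerivAt (fun x : ℝ => (K * (2 * x - 1) + (K + 1) * groverGap K x + 1) /
      (Real.sqrt (K + 1) * groverGap K x))
      (((2*K + (K+1) * D') * (Real.sqrt (K+1) * d) - N * (Real.sqrt (K+1) * D'))
        / (Real.sqrt (K+1) * d)^2) r := by
    exact hNum.div hDen hdne
  have hval_pos : 0 < N / (Real.sqrt (K+1) * d) := div_pos hN (mul_pos hSs hdpos)
  have hF : HasDerivAt (wkbFminus K)
      ((((2*K + (K+1) * D') * (Real.sqrt (K+1) * d) - N * (Real.sqrt (K+1) * D'))
        / (Real.sqrt (K+1) * d)^2) / (2 * Real.sqrt (N / (Real.sqrt (K+1) * d)))) r := by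
    have := hh.sqrt (ne_of_gt hval_pos)
    exact this
  have hFpos : 0 < wkbFminus K r := by
    have : wkbFminus K r = Real.sqrt (N / (Real.sqrt (K+1) * d)) := by
      simp [wkbFminus, ← hd, ← hNdef]
    rw [this]
    exact Real.sqrt_pos.mpr hval_pos
  refine ⟨hFpos, hF.differentiableAt, ?_⟩
  rw [hF.deriv, hDelta.deriv]
  have hFval : wkbFminus K r = Real.sqrt (N / (Real.sqrt (K+1) * d)) := by
    simp [wkbFminus, ← hd, ← hNdef]
  rw [hFval]
  have hFF : Real.sqrt (N / (Real.sqrt (K+1) * d)) * Real.sqrt (N / (Real.sqrt (K+1) * d))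
      = N / (Real.sqrt (K+1) * d) := Real.mul_self_sqrt hval_pos.le
  rw [div_div, mul_assoc, hFF]
  have hdne' : d ≠ 0 := hdpos.ne'
  have hNne : N ≠ 0 := hN.ne'
  have hrne : (1:ℝ) - r ≠ 0 := by nlinarith
  have hSne : K + 1 ≠ 0 := hS.ne'
  have hSsne : Real.sqrt (K+1) ≠ 0 := hSs.ne'
  have hD'val : D' = 2*K*(2*r-1)/((K+1)*d) := by
    rw [hD']; field_simp; ring
  have e1 : (2*K + (K+1)*D')*d - N*D' = 4*K*(1-r)/((K+1)*d) := by
    rw [hD'val, hNdef]; field_simp; linear_combination 2*hSd2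
  have key : (((2*K + (K+1) * D') * (Real.sqrt (K+1) * d) - N * (Real.sqrt (K+1) * D'))
        / (Real.sqrt (K+1) * d)^2) / (2 * (N / (Real.sqrt (K+1) * d)))
      = 2*K*(1-r)/((K+1)*N*d^2) := by
    rw [show (2*K + (K+1)*D')*(Real.sqrt (K+1)*d) - N*(Real.sqrt (K+1)*D')
        = Real.sqrt (K+1) * ((2*K + (K+1)*D')*d - N*D') from by ring, e1]
    have h2 : Real.sqrt (K+1) ^ 2 = K + 1 := Real.sq_sqrt hS.le
    field_simp [h2]
    ring
  rw [key, hD'val]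
  have hrpos : (0:ℝ) < 1 - r := by linarith
  have final1 : 2*K*(1-r)/((K+1)*N*d^2)
      = ((K+1)*d - (K*(2*r-1)+1))/(2*(K+1)*d^2*(1-r)) := by
    rw [div_eq_div_iff (by positivity) (by positivity)]
    linear_combination (-(K+1)*d^2) * hprod
  have final2 : -(1/2 : ℝ)*(2*K*(2*r-1)/((K+1)*d)/d + 1/(1-r) - 1/((1-r)*d))
      = ((K+1)*d - (K*(2*r-1)+1))/(2*(K+1)*d^2*(1-r)) := by
    field_simp
    linear_combination (-1) * hSd2
  rw [final1, ← final2]
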